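/- Let m > 0, σ > 0, s ∈ [(σ²−m²)/(σ²+m²), 1), b, q ≥ 0, t ∈ [0, m/2], and w₂ := (1−s)σ²/2. Define the dual assignment β := q(m−t), α := q, y₁ := 0, y₂ := (b+q)t/m². Then the dual feasibility conditions hold: β + α(x−m) + y₁(x−m)² ≥ q(x−t) for all x ≥ m, and β + α(x−m) + y₂(x−m)² ≥ q(x−t)⁺ + b(t−x)⁺ for all 0 ≤ x ≤ m, and the dual objective β + α·0 + y₁·w₁' + y₂·w₂ evaluated appropriately equals ((b+q)(1−s)σ²/(2m²) − q)·t + q·m, where the y₁ term contributes zero. -/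
import Mathlib


theorem stmt11 (m σ s b q t : ℝ) (hm : 0 < m) (hσ : 0 < σ)
    (hs1 : (σ^2 - m^2)/(σ^2 + m^2) ≤ s) (hs2 : s < 1) (hb : 0 ≤ b) (hq : 0 ≤ q)
    (ht0 : 0 ≤ t) (ht : t ≤ m/2)
    (w₁ w₂ β α y₁ y₂ : ℝ)
    (hw₁ : w₁ = (1+s)*σ^2/2) (hw₂ : w₂ = (1-s)*σ^2/2)
    (hβ : β = q*(m-t)) (hα : α = q) (hy₁ : y₁ = 0) (hy₂ : y₂ = (b+q)*t/m^2) :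
    (∀ x : ℝ, m ≤ x → q*(x - t) ≤ β + α*(x - m) + y₁*(x - m)^2) ∧
    (∀ x : ℝ, 0 ≤ x → x ≤ m →
      q * max (x - t) 0 + b * max (t - x) 0 ≤ β + α*(x - m) + y₂*(x - m)^2) ∧
    β + w₁*y₁ + w₂*y₂ = ((b+q)*(1-s)*σ^2/(2*m^2) - q)*t + q*m := by
  have hm2 : (0:ℝ) < m^2 := by positivity
  simp only [hβ, hα, hy₁, hy₂, hw₁, hw₂]
  refine ⟨fun x hx => by nlinarith, fun x hx0 hxm => ?_, by field_simp; ring⟩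
  have hy2 : 0 ≤ (b+q)*t/m^2 := by positivity
  rcases le_total t x with h | h
  · rw [max_eq_left (by linarith), max_eq_right (by linarith)]
    have : 0 ≤ (b+q)*t/m^2 * (x-m)^2 := by positivity
    nlinarith
  · rw [max_eq_right (by linarith), max_eq_left (by linarith)]
    have key : 0 ≤ x*(m^2 - 2*m*t + t*x) :=
      mul_nonneg hx0 (by nlinarith)
    have h2 : (b+q)*(m^2*(t-x)) ≤ (b+q)*(t*(x-m)^2) := by nlinarith
    have h4 : (b+q)*(t-x) ≤ (b+q)*(t*(x-m)^2)/m^2 := by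
      rw [le_div_iff₀ hm2]; nlinarith
    have h3 : (b+q)*t/m^2*(x-m)^2 = (b+q)*(t*(x-m)^2)/m^2 := by ring
    rw [h3]
    linarith
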